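/- For every real s > 2, the sum over all (i, j) ∈ ℕ × ℤ of (1 + (i·sign(j) + j)²)^{−s/2} is finite, where sign(j) := 1 for j ≥ 0 and sign(j) := −1 for j < 0. (Hence the operator D ε_{i,j} = (i·sign(j) + j) ε_{i,j} on ℓ²(ℕ × ℤ) is 2-summable: (1 + D²)^{−s/2} is trace class for every s > 2.) -/
import Mathlib


/-- `sign j`: `1` for `j ≥ 0`, `-1` for `j < 0`. -/
def signZ (j : ℤ) : ℝ := if 0 ≤ j then 1 else -1

lemma aux_nat (t : ℝ) (ht : 1 < t) :
    Summable (fun n : ℕ => (1 + (n : ℝ) ^ 2) ^ (-t / 2)) := by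
  have h0 : Summable (fun n : ℕ => ((n : ℝ) + 1) ^ (-t)) := by
    have h1 := (Real.summable_nat_rpow (p := -t)).2 (by linarith)
    have h2 := (summable_nat_add_iff (f := fun n : ℕ => (n : ℝ) ^ (-t)) 1).2 h1
    simpa using h2
  apply Summable.of_nonneg_of_le
    (fun n => Real.rpow_nonneg (by positivity) _) _ (h0.mul_left ((2 : ℝ) ^ (t / 2)))
  intro n
  have hb : (0 : ℝ) < ((n : ℝ) + 1) ^ 2 / 2 := by positivity
  have hle : ((n : ℝ) + 1) ^ 2 / 2 ≤ 1 + (n : ℝ) ^ 2 := by nlinarith [sq_nonneg ((n : ℝ) - 1)]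
  have := Real.rpow_le_rpow_of_nonpos hb hle (by linarith : -t / 2 ≤ 0)
  refine this.trans_eq ?_
  rw [Real.div_rpow (by positivity) (by norm_num),
    ← Real.rpow_natCast ((n : ℝ) + 1) 2, ← Real.rpow_mul (by positivity),
    show ((2:ℕ):ℝ) * (-t/2) = -t by push_cast; ring,
    show (-t/2 : ℝ) = -(t/2) by ring,
    Real.rpow_neg (by norm_num : (0:ℝ) ≤ 2), div_eq_mul_inv, inv_inv, mul_comm]

lemma aux_int (t : ℝ) (ht : 1 < t) :
    Summable (fun j : ℤ => (1 + (j : ℝ) ^ 2) ^ (-t / 2)) := by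
  apply Summable.of_nat_of_neg (f := fun j : ℤ => (1 + (j : ℝ) ^ 2) ^ (-t / 2)) <;>
    simpa using aux_nat t ht

/-- For every `s > 2`, `∑_{(i,j) ∈ ℕ × ℤ} (1 + (i·sign(j) + j)²)^{−s/2} < ∞`:
the Dirac operator `D ε_{i,j} = (i·sign(j)+j) ε_{i,j}` on `ℓ²(ℕ × ℤ)` is 2-summable. -/
theorem CP2_dirac_two_summable (s : ℝ) (hs : 2 < s) :
    Summable (fun p : ℕ × ℤ =>
      (1 + ((p.1 : ℝ) * signZ p.2 + (p.2 : ℝ)) ^ 2) ^ (-s / 2)) := by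
  have hf := aux_nat (s / 2) (by linarith)
  have hg := aux_int (s / 2) (by linarith)
  have hprod := hf.mul_of_nonneg hg
    (fun n => Real.rpow_nonneg (by positivity) _)
    (fun j => Real.rpow_nonneg (by positivity) _)
  apply Summable.of_nonneg_of_le (fun p => Real.rpow_nonneg (by positivity) _) _ hprod
  rintro ⟨i, j⟩
  set X : ℝ := (i : ℝ) * signZ j + (j : ℝ) with hXdef
  have hXi : (i : ℝ) ^ 2 ≤ X ^ 2 ∧ (j : ℝ) ^ 2 ≤ X ^ 2 := by
    have hi : (0 : ℝ) ≤ (i : ℝ) := Nat.cast_nonneg i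
    by_cases hj : 0 ≤ j
    · have hj' : (0 : ℝ) ≤ (j : ℝ) := by exact_mod_cast hj
      have : X = (i : ℝ) + (j : ℝ) := by simp [hXdef, signZ, hj]
      constructor <;> nlinarith
    · have hj' : (j : ℝ) ≤ 0 := by
        have : j ≤ 0 := le_of_not_ge hj
        exact_mod_cast this
      have : X = -(i : ℝ) + (j : ℝ) := by simp [hXdef, signZ, hj]
      constructor <;> nlinarith
  have hmul : (1 + (i : ℝ) ^ 2) * (1 + (j : ℝ) ^ 2) ≤ (1 + X ^ 2) ^ 2 := by
    have h3 : (i : ℝ) ^ 2 * (j : ℝ) ^ 2 ≤ X ^ 2 * X ^ 2 :=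
      mul_le_mul hXi.1 hXi.2 (sq_nonneg _) (sq_nonneg _)
    nlinarith [hXi.1, hXi.2]
  have key : (1 + X ^ 2) ^ (-s / 2)
      ≤ ((1 + (i : ℝ) ^ 2) * (1 + (j : ℝ) ^ 2)) ^ (-(s / 2) / 2) := by
    have h := Real.rpow_le_rpow_of_nonpos (by positivity) hmul
      (by linarith : -(s / 2) / 2 ≤ 0)
    refine le_trans (le_of_eq ?_) h
    rw [← Real.rpow_natCast (1 + X ^ 2) 2, ← Real.rpow_mul (by positivity)]
    norm_num
    ring_nf
  refine key.trans_eq ?_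
  rw [Real.mul_rpow (by positivity) (by positivity)]
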